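/- For every λ ≠ 0 and every Laguerre point (ξ,λ) = (|λ|(2j+n), λ) ∈ ℝ² with j ∈ ℕ, one has ξ ≥ |λ|; moreover for fixed λ ≠ 0, Σ_{j=0}^∞ C(j+n−1, j) (1 + |λ|(2j+n))^{−(n+2)} ≤ C |λ|^{−(n+1)} for a constant C depending only on n. -/

import Mathlib

open Real

lemma basel_shift : HasSum (fun j : ℕ => 1 / ((j : ℝ) + 1) ^ 2) (π ^ 2 / 6) := by
  have h : HasSum (fun i : ℕ => (1 : ℝ) / (i : ℝ) ^ 2) (π ^ 2 / 6) := hasSum_zeta_two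
  have h2 := (hasSum_nat_add_iff' (f := fun i : ℕ => (1 : ℝ) / (i : ℝ) ^ 2) 1).mpr h
  simp only [Finset.range_one, Finset.sum_singleton, Nat.cast_zero] at h2
  norm_num at h2
  convert h2 using 2 with j
  · rfl
  · ring

lemma fan_key (n j : ℕ) (hn : 1 ≤ n) (L : ℝ) (hL : 0 < L) :
    ((j + n - 1).choose j : ℝ) * (1 + L * (2 * j + n)) ^ (-((n : ℤ) + 2))
      ≤ (L ^ (n + 1))⁻¹ * (1 / ((j : ℝ) + 1) ^ 2) := by
  set B : ℝ := 2 * j + n with hBdef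
  have hB1 : (j : ℝ) + 1 ≤ B := by
    have : (1 : ℝ) ≤ (n : ℝ) := by exact_mod_cast hn
    simp only [hBdef]; nlinarith [Nat.cast_nonneg (α := ℝ) j]
  have hj1 : (0:ℝ) < (j : ℝ) + 1 := by positivity
  have hB0 : (0 : ℝ) < B := lt_of_lt_of_le hj1 hB1
  have ha : (0 : ℝ) < L * B := mul_pos hL hB0
  -- rewrite the zpow
  have hz : (1 + L * B) ^ (-((n : ℤ) + 2)) = ((1 + L * B) ^ (n + 2))⁻¹ := by
    have : (-((n : ℤ) + 2)) = -((n + 2 : ℕ) : ℤ) := by push_cast; ring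
    rw [this, zpow_neg, zpow_natCast]
  rw [hz]
  -- binomial bound
  have hc : ((j + n - 1).choose j : ℝ) ≤ B ^ (n - 1) := by
    have h1 : j ≤ j + n - 1 := by omega
    have h2 : (j + n - 1).choose j = (j + n - 1).choose (n - 1) := by
      rw [← Nat.choose_symm h1]
      congr 1
      omega
    have h3 : (j + n - 1).choose (n - 1) ≤ (j + n - 1) ^ (n - 1) :=
      Nat.choose_le_pow _ _
    have h4 : (j + n - 1) ^ (n - 1) ≤ (2 * j + n) ^ (n - 1) :=
      Nat.pow_le_pow_left (by omega) _
    have : ((j + n - 1).choose j : ℝ) ≤ ((2 * j + n) ^ (n - 1) : ℕ) := by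
      exact_mod_cast (h2 ▸ h3).trans h4
    refine this.trans ?_
    push_cast
    exact le_of_eq rfl
  -- power bound
  have hpow : (L * B) ^ (n + 1) ≤ (1 + L * B) ^ (n + 2) := by
    calc (L * B) ^ (n + 1) ≤ (1 + L * B) ^ (n + 1) :=
          pow_le_pow_left₀ ha.le (by linarith) _
      _ ≤ (1 + L * B) ^ (n + 2) :=
          pow_le_pow_right₀ (by linarith) (by omega)
  have hinv : ((1 + L * B) ^ (n + 2))⁻¹ ≤ ((L * B) ^ (n + 1))⁻¹ :=
    inv_anti₀ (pow_pos ha _) hpow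
  have hcnn : (0 : ℝ) ≤ ((j + n - 1).choose j : ℝ) := Nat.cast_nonneg _
  calc ((j + n - 1).choose j : ℝ) * ((1 + L * B) ^ (n + 2))⁻¹
      ≤ B ^ (n - 1) * ((L * B) ^ (n + 1))⁻¹ := by
        exact mul_le_mul hc hinv (by positivity) (by positivity)
    _ = (L ^ (n + 1))⁻¹ * (B ^ 2)⁻¹ := by
        have hsplit : B ^ (n + 1) = B ^ (n - 1) * B ^ 2 := by
          rw [← pow_add]
          congr 1
          omega
        rw [mul_pow, hsplit]
        field_simp
    _ ≤ (L ^ (n + 1))⁻¹ * (1 / ((j : ℝ) + 1) ^ 2) := by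
        have h2 : ((j : ℝ) + 1) ^ 2 ≤ B ^ 2 := by nlinarith
        have : (B ^ 2)⁻¹ ≤ (((j : ℝ) + 1) ^ 2)⁻¹ :=
          inv_anti₀ (by positivity) h2
        rw [one_div]
        exact mul_le_mul_of_nonneg_left this (by positivity)

theorem fan_laguerre_points_bound (n : ℕ) (hn : 1 ≤ n) :
    (∀ (lam : ℝ), lam ≠ 0 → ∀ j : ℕ, |lam| ≤ |lam| * (2 * j + n)) ∧
    ∃ C : ℝ, 0 < C ∧ ∀ (lam : ℝ), lam ≠ 0 →
      ∑' j : ℕ, ((j + n - 1).choose j : ℝ) * (1 + |lam| * (2 * j + n)) ^ (-((n : ℤ) + 2))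
        ≤ C * |lam| ^ (-((n : ℤ) + 1)) := by
  constructor
  · intro lam hlam j
    have h1 : (1 : ℝ) ≤ 2 * j + n := by
      have : (1 : ℝ) ≤ (n : ℝ) := by exact_mod_cast hn
      nlinarith [Nat.cast_nonneg (α := ℝ) j]
    exact le_mul_of_one_le_right (abs_nonneg lam) h1
  · refine ⟨3, by norm_num, fun lam hlam => ?_⟩
    set L := |lam| with hLdef
    have hL : 0 < L := abs_pos.mpr hlam
    have hzL : L ^ (-((n : ℤ) + 1)) = (L ^ (n + 1))⁻¹ := by
      have : (-((n : ℤ) + 1)) = -((n + 1 : ℕ) : ℤ) := by push_cast; ring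
      rw [this, zpow_neg, zpow_natCast]
    have hg : Summable (fun j : ℕ => (L ^ (n + 1))⁻¹ * (1 / ((j : ℝ) + 1) ^ 2)) :=
      basel_shift.summable.mul_left _
    have hkey : ∀ j : ℕ,
        ((j + n - 1).choose j : ℝ) * (1 + L * (2 * j + n)) ^ (-((n : ℤ) + 2))
          ≤ (L ^ (n + 1))⁻¹ * (1 / ((j : ℝ) + 1) ^ 2) := fun j => fan_key n j hn L hL
    have hnn : ∀ j : ℕ,
        (0:ℝ) ≤ ((j + n - 1).choose j : ℝ) * (1 + L * (2 * j + n)) ^ (-((n : ℤ) + 2)) := by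
      intro j
      have h0 : (0:ℝ) < 1 + L * (2 * j + n) := by positivity
      positivity
    have hf : Summable (fun j : ℕ =>
        ((j + n - 1).choose j : ℝ) * (1 + L * (2 * j + n)) ^ (-((n : ℤ) + 2))) :=
      Summable.of_nonneg_of_le hnn hkey hg
    calc ∑' j : ℕ, ((j + n - 1).choose j : ℝ) * (1 + L * (2 * j + n)) ^ (-((n : ℤ) + 2))
        ≤ ∑' j : ℕ, (L ^ (n + 1))⁻¹ * (1 / ((j : ℝ) + 1) ^ 2) :=
          Summable.tsum_le_tsum hkey hf hg
      _ = (L ^ (n + 1))⁻¹ * (π ^ 2 / 6) := by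
          rw [tsum_mul_left, basel_shift.tsum_eq]
      _ ≤ 3 * L ^ (-((n : ℤ) + 1)) := by
          rw [hzL]
          have hpi : π ^ 2 / 6 ≤ 3 := by nlinarith [pi_le_four, pi_pos]
          have hLp : (0:ℝ) < (L ^ (n + 1))⁻¹ := by positivity
          nlinarith
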